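/- arXiv:2502.02157 — 5 statements merged into one kernel-verified Lean document; each statement's English description precedes it below -/
import Mathlib

section
/- For every n ≥ 2 and every 1 ≤ i < n, the projection of the chain word C_n to the variables {x_i, x_{i+1}} (deleting all other letters) equals x_i x_{i+1} x_i x_{i+1}, and for every 1 ≤ i < j ≤ n with j − i ≥ 2, the projection of C_n to {x_i, x_j} equals x_i² x_j². -/
def chainW : ℕ → List ℕ
  | 0 => []
  | 1 => [1, 1]
  | (k+2) => (chainW (k+1)).dropLast ++ [k+2, k+1, k+2]

def proj2 (u : List ℕ) (i j : ℕ) : List ℕ := u.filter (fun a => a == i || a == j)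

lemma proj2_append (u v : List ℕ) (i j : ℕ) :
    proj2 (u ++ v) i j = proj2 u i j ++ proj2 v i j := List.filter_append ..

lemma proj2_nil (i j : ℕ) : proj2 [] i j = [] := rfl

lemma proj2_cons (a : ℕ) (u : List ℕ) (i j : ℕ) :
    proj2 (a :: u) i j = (if a = i ∨ a = j then [a] else []) ++ proj2 u i j := by
  simp only [proj2, List.filter_cons]
  split_ifs with h1 h2 h2 <;> simp_all

lemma count_single (a i : ℕ) : ([a] : List ℕ).count i = if a = i then 1 else 0 := by
  simp [List.count_singleton']

lemma proj2_no_j (u : List ℕ) (i j : ℕ) (h : ∀ a ∈ u, a ≠ j) :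
    proj2 u i j = List.replicate (u.count i) i := by
  have : proj2 u i j = u.filter (· == i) := by
    apply List.filter_congr
    intro a ha
    simp [h a ha]
  rw [this, List.filter_beq]

lemma key : ∀ n, 1 ≤ n →
    (∀ a ∈ chainW n, 1 ≤ a ∧ a ≤ n) ∧
    (chainW n = (chainW n).dropLast ++ [n]) ∧
    (∀ i, 1 ≤ i → i ≤ n → (chainW n).count i = 2) ∧
    (∀ i, 1 ≤ i → i < n → proj2 (chainW n) i (i+1) = [i, i+1, i, i+1]) ∧
    (∀ i j, 1 ≤ i → i < j → j ≤ n → 2 ≤ j - i → proj2 (chainW n) i j = [i, i, j, j]) := by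
  intro n
  induction n with
  | zero => omega
  | succ n ih =>
    intro _
    rcases Nat.lt_or_ge n 1 with h1 | hn1
    · have hn : n = 0 := by omega
      subst hn
      refine ⟨?_, ?_, ?_, ?_, ?_⟩
      · intro a ha; simp [chainW] at ha; omega
      · rfl
      · intro i h1 h2
        have : i = 1 := by omega
        subst this; decide
      · intro i h1 h2; omega
      · intro i j h1 h2 h3 h4; omega
    · obtain ⟨hmem, hlast, hcount, hadj, hfar⟩ := ih hn1
      obtain ⟨m, rfl⟩ : ∃ m, n = m + 1 := ⟨n - 1, by omega⟩
      obtain ⟨D, hDeq⟩ : ∃ D, chainW (m+1) = D ++ [m+1] := ⟨_, hlast⟩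
      have hdrop : (chainW (m+1)).dropLast = D := by rw [hDeq, List.dropLast_concat]
      have hdef : chainW (m+1+1) = D ++ [m+2, m+1, m+2] := by
        show (chainW (m+1)).dropLast ++ [m+2, m+1, m+2] = _
        rw [hdrop]
      have hmemD : ∀ a ∈ D, 1 ≤ a ∧ a ≤ m + 1 := by
        intro a ha
        exact hmem a (by rw [hDeq]; exact List.mem_append_left _ ha)
      have hcountD : ∀ i, (chainW (m+1)).count i = D.count i + if m+1 = i then 1 else 0 := by
        intro i
        rw [hDeq, List.count_append, count_single]
      have hmem' : ∀ a ∈ chainW (m+1+1), 1 ≤ a ∧ a ≤ m+1+1 := by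
        intro a ha
        rw [hdef] at ha
        rcases List.mem_append.mp ha with h | h
        · have := hmemD a h; omega
        · simp at h; omega
      have hlast' : chainW (m+1+1) = (chainW (m+1+1)).dropLast ++ [m+1+1] := by
        rw [hdef]
        rw [show (D ++ [m+2, m+1, m+2]) = (D ++ [m+2, m+1]) ++ [m+2] by simp]
        rw [List.dropLast_concat]
      have hcount' : ∀ i, 1 ≤ i → i ≤ m+1+1 → (chainW (m+1+1)).count i = 2 := by
        intro i h1i hin
        rw [hdef, List.count_append]
        have htr : ([m+2, m+1, m+2] : List ℕ).count i
            = (if m+2 = i then 2 else 0) + (if m+1 = i then 1 else 0) := by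
          simp [List.count_cons]
          split_ifs <;> omega
        rw [htr]
        rcases Nat.lt_or_ge i (m+1) with h | h
        · have hL2 : (chainW (m+1)).count i = 2 := hcount i h1i (by omega)
          have hD2 := hcountD i
          rw [if_neg (by omega)] at hD2
          rw [if_neg (by omega), if_neg (by omega)]
          omega
        · rcases Nat.eq_or_lt_of_le h with h2 | h2
          · have hL2 : (chainW (m+1)).count i = 2 := hcount i h1i (by omega)
            have hD2 := hcountD i
            rw [if_pos (by omega)] at hD2
            rw [if_neg (by omega), if_pos (by omega)]
            omega
          · have hD0 : D.count i = 0 := by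
              rw [List.count_eq_zero]
              intro hmm
              have := hmemD i hmm; omega
            rw [hD0, if_pos (by omega), if_neg (by omega)]
      refine ⟨hmem', hlast', hcount', ?_, ?_⟩
      · -- adjacent
        intro i h1i hin
        rw [hdef, proj2_append]
        rcases Nat.lt_or_ge (i+1) (m+1) with h | h
        · have ht : proj2 [m+2, m+1, m+2] i (i+1) = [] := by
            rw [proj2_cons, proj2_cons, proj2_cons, proj2_nil,
              if_neg (show ¬(m+2 = i ∨ m+2 = i+1) by omega),
              if_neg (show ¬(m+1 = i ∨ m+1 = i+1) by omega)]
            rfl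
          have hnn : proj2 [m+1] i (i+1) = [] := by
            rw [proj2_cons, proj2_nil, if_neg (show ¬(m+1 = i ∨ m+1 = i+1) by omega)]
            rfl
          have hLD : proj2 (chainW (m+1)) i (i+1) = proj2 D i (i+1) := by
            rw [hDeq, proj2_append, hnn, List.append_nil]
          rw [ht, List.append_nil, ← hLD]
          exact hadj i h1i (by omega)
        · rcases Nat.eq_or_lt_of_le h with h2 | h2
          · -- i + 1 = m + 1
            have ht : proj2 [m+2, m+1, m+2] i (i+1) = [m+1] := by
              rw [proj2_cons, proj2_cons, proj2_cons, proj2_nil,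
                if_neg (show ¬(m+2 = i ∨ m+2 = i+1) by omega),
                if_pos (show (m+1 = i ∨ m+1 = i+1) by omega)]
              rfl
            have hLD : proj2 (chainW (m+1)) i (i+1) = proj2 D i (i+1) ++ [m+1] := by
              rw [hDeq, proj2_append]
              congr 1
              rw [proj2_cons, proj2_nil, if_pos (show (m+1 = i ∨ m+1 = i+1) by omega)]
              rfl
            have hLval : proj2 (chainW (m+1)) i (i+1) = [i, i+1, i, i+1] :=
              hadj i h1i (by omega)
            have hDval : proj2 D i (i+1) = [i, i+1, i] := by
              have heq := hLD.symm.trans hLval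
              have h4 : m + 1 = i + 1 := by omega
              rw [h4] at heq
              exact (List.append_inj' heq rfl).1
            rw [hDval, ht]
            have h4 : m + 1 = i + 1 := by omega
            rw [h4]
            rfl
          · -- i = m + 1
            have hi : i = m + 1 := by omega
            subst hi
            have ht : proj2 [m+2, m+1, m+2] (m+1) (m+1+1) = [m+2, m+1, m+2] := by
              rw [proj2_cons, proj2_cons, proj2_cons, proj2_nil,
                if_pos (show (m+2 = m+1 ∨ m+2 = m+1+1) by omega),
                if_pos (show (m+1 = m+1 ∨ m+1 = m+1+1) by omega)]
              rfl
            have hDval : proj2 D (m+1) (m+1+1) = [m+1] := by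
              rw [proj2_no_j D (m+1) (m+1+1) (fun a ha => by have := hmemD a ha; omega)]
              have hcd := hcountD (m+1)
              rw [if_pos rfl] at hcd
              have hc : D.count (m+1) = 1 := by
                have := hcount (m+1) (by omega) (le_refl _); omega
              rw [hc]
              rfl
            rw [hDval, ht]
            rfl
      · -- far apart
        intro i j h1i hij hjn hdist
        rw [hdef, proj2_append]
        rcases Nat.lt_or_ge j (m+1) with h | h
        · have ht : proj2 [m+2, m+1, m+2] i j = [] := by
            rw [proj2_cons, proj2_cons, proj2_cons, proj2_nil,
              if_neg (show ¬(m+2 = i ∨ m+2 = j) by omega),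
              if_neg (show ¬(m+1 = i ∨ m+1 = j) by omega)]
            rfl
          have hnn : proj2 [m+1] i j = [] := by
            rw [proj2_cons, proj2_nil, if_neg (show ¬(m+1 = i ∨ m+1 = j) by omega)]
            rfl
          have hLD : proj2 (chainW (m+1)) i j = proj2 D i j := by
            rw [hDeq, proj2_append, hnn, List.append_nil]
          rw [ht, List.append_nil, ← hLD]
          exact hfar i j h1i hij (by omega) hdist
        · rcases Nat.eq_or_lt_of_le h with h2 | h2
          · -- j = m + 1
            have hj : j = m + 1 := by omega
            subst hj
            have ht : proj2 [m+2, m+1, m+2] i (m+1) = [m+1] := by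
              rw [proj2_cons, proj2_cons, proj2_cons, proj2_nil,
                if_neg (show ¬(m+2 = i ∨ m+2 = m+1) by omega),
                if_pos (show (m+1 = i ∨ m+1 = m+1) by omega)]
              rfl
            have hLD : proj2 (chainW (m+1)) i (m+1) = proj2 D i (m+1) ++ [m+1] := by
              rw [hDeq, proj2_append]
              congr 1
              rw [proj2_cons, proj2_nil, if_pos (show (m+1 = i ∨ m+1 = m+1) by omega)]
              rfl
            have hLval : proj2 (chainW (m+1)) i (m+1) = [i, i, m+1, m+1] :=
              hfar i (m+1) h1i hij (le_refl _) hdist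
            have hDval : proj2 D i (m+1) = [i, i, m+1] := by
              have heq := hLD.symm.trans hLval
              exact (List.append_inj' heq rfl).1
            rw [hDval, ht]
            rfl
          · -- j = m + 2
            have hj : j = m + 1 + 1 := by omega
            subst hj
            have ht : proj2 [m+2, m+1, m+2] i (m+1+1) = [m+2, m+2] := by
              rw [proj2_cons, proj2_cons, proj2_cons, proj2_nil,
                if_pos (show (m+2 = i ∨ m+2 = m+1+1) by omega),
                if_neg (show ¬(m+1 = i ∨ m+1 = m+1+1) by omega)]
              rfl
            have hDval : proj2 D i (m+1+1) = [i, i] := by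
              rw [proj2_no_j D i (m+1+1) (fun a ha => by have := hmemD a ha; omega)]
              have hcd := hcountD i
              rw [if_neg (by omega)] at hcd
              have hc : D.count i = 2 := by
                have := hcount i h1i (by omega); omega
              rw [hc]
              rfl
            rw [hDval, ht]
            rfl

/-- For `n ≥ 2`: the projection of the chain word `C n` to `{xᵢ, x_{i+1}}` is
`xᵢ x_{i+1} xᵢ x_{i+1}` for `1 ≤ i < n`, and its projection to `{xᵢ, xⱼ}` is
`xᵢ² xⱼ²` for `1 ≤ i < j ≤ n` with `j - i ≥ 2`. -/
theorem chain_projections (n : ℕ) (hn : 2 ≤ n) :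
    (∀ i : ℕ, 1 ≤ i → i < n → proj2 (chainW n) i (i+1) = [i, i+1, i, i+1]) ∧
    (∀ i j : ℕ, 1 ≤ i → i < j → j ≤ n → 2 ≤ j - i →
      proj2 (chainW n) i j = [i, i, j, j]) := by
  obtain ⟨-, -, -, h4, h5⟩ := key n (by omega)
  exact ⟨h4, h5⟩
end

section
/- For every n ≥ 1 and every 1 ≤ m ≤ n, deleting the variable x_m from the chain word C_n yields the concatenation C(x_1,...,x_{m−1}) · C(x_{m+1},...,x_n), where C(y_1,...,y_k) denotes the chain word C_k with variables renamed to y_1,...,y_k in order. -/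
lemma chainW_le : ∀ n, ∀ a ∈ chainW n, a ≤ n := by
  intro n
  induction n using Nat.strong_induction_on with
  | _ n ih =>
    match n with
    | 0 => simp [chainW]
    | 1 => simp [chainW]
    | (k+2) =>
      intro a ha
      rw [chainW] at ha
      simp only [List.mem_append] at ha
      rcases ha with ha | ha
      · have := ih (k+1) (by omega) a (List.dropLast_subset _ ha)
        omega
      · simp at ha; omega

lemma chainW_concat : ∀ n, 1 ≤ n → ∃ c, chainW n = c ++ [n] := by
  intro n
  induction n with
  | zero => omega
  | succ k ih =>
    intro _
    match k with
    | 0 => exact ⟨[1], rfl⟩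
    | (j+1) =>
      obtain ⟨c, hc⟩ := ih (by omega)
      refine ⟨c ++ [j+2, j+1], ?_⟩
      rw [chainW, hc, List.dropLast_concat]
      simp

lemma filter_chainW_self : ∀ m, 1 ≤ m →
    (chainW m).filter (fun a => a != m) = chainW (m-1) := by
  intro m
  induction m with
  | zero => omega
  | succ k ih =>
    intro _
    match k with
    | 0 => rfl
    | (j+1) =>
      obtain ⟨c, hc⟩ := chainW_concat (j+1) (by omega)
      rw [chainW, List.filter_append]
      have h1 : (chainW (j+1)).dropLast.filter (fun a => a != (j+2)) =
          (chainW (j+1)).dropLast := by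
        apply List.filter_eq_self.mpr
        intro a ha
        have := chainW_le (j+1) a (List.dropLast_subset _ ha)
        simp only [bne_iff_ne, ne_eq, decide_eq_true_eq]
        omega
      have h2 : [j+2, j+1, j+2].filter (fun a => a != (j+2)) = [j+1] := by
        simp
      rw [h1, h2, hc, List.dropLast_concat]
      simpa using hc.symm

/-- For every `n ≥ 1` and `1 ≤ m ≤ n`, deleting the variable `xₘ` from `C n` yields
`C(x₁,…,x_{m-1}) · C(x_{m+1},…,xₙ)`, where the second factor is the chain word
`C (n-m)` with its variables renamed (shifted) to `x_{m+1},…,xₙ`. -/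
theorem chain_delete (n m : ℕ) (hn : 1 ≤ n) (h1 : 1 ≤ m) (h2 : m ≤ n) :
    (chainW n).filter (fun a => a != m) =
      chainW (m - 1) ++ (chainW (n - m)).map (fun a => a + m) := by
  clear hn
  induction n, h2 using Nat.le_induction with
  | base =>
    simp only [Nat.sub_self, chainW, List.map_nil, List.append_nil]
    exact filter_chainW_self m h1
  | succ n hmn ih =>
    obtain ⟨p, rfl⟩ : ∃ p, n = p + 1 := ⟨n - 1, by omega⟩
    rcases eq_or_lt_of_le hmn with hcase | hcase
    · -- m = p + 1
      rw [hcase]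
      obtain ⟨c, hc⟩ := chainW_concat (p+1) (by omega)
      have hfc : c.filter (fun a => a != (p+1)) = chainW p := by
        have h := filter_chainW_self (p+1) (by omega)
        rw [hc, List.filter_append] at h
        simpa using h
      rw [show p + 1 + 1 = p + 2 from rfl, chainW, List.filter_append, hc,
        List.dropLast_concat, hfc]
      have h2' : [p+2, p+1, p+2].filter (fun a => a != (p+1)) = [p+2, p+2] := by simp
      rw [h2', show p + 2 - (p+1) = 1 by omega, show p + 1 - 1 = p by omega]
      simp [chainW]
      omega
    · -- m ≤ p
      have hmp : m ≤ p := by omega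
      obtain ⟨c, hc⟩ := chainW_concat (p+1) (by omega)
      obtain ⟨j, hj⟩ : ∃ j, p + 1 - m = j + 1 := ⟨p - m, by omega⟩
      obtain ⟨d, hd⟩ := chainW_concat (j+1) (by omega)
      have ihx := ih
      rw [hj, hc, hd, List.filter_append, List.map_append] at ihx
      have hne : ([p+1].filter (fun a => a != m)) = [p+1] := by
        simp only [List.filter_cons, List.filter_nil]
        rw [if_pos]
        simp only [bne_iff_ne, ne_eq, decide_eq_true_eq]
        omega
      rw [hne] at ihx
      have hkm : j + 1 + m = p + 1 := by omega
      simp only [List.map_cons, List.map_nil, hkm] at ihx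
      rw [← List.append_assoc] at ihx
      have hfc := List.append_cancel_right ihx
      rw [show p + 1 + 1 = p + 2 from rfl, chainW, List.filter_append, hc,
        List.dropLast_concat, hfc]
      have htail : [p+2, p+1, p+2].filter (fun a => a != m) = [p+2, p+1, p+2] := by
        apply List.filter_eq_self.mpr
        intro a ha
        simp only [List.mem_cons, List.not_mem_nil, or_false] at ha
        simp only [bne_iff_ne, ne_eq, decide_eq_true_eq]
        omega
      rw [htail, show p + 2 - m = j + 2 by omega, chainW, hd, List.dropLast_concat,
        List.map_append]
      simp only [List.map_cons, List.map_nil]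
      rw [show j+2+m = p+2 by omega, show j+1+m = p+1 by omega, List.append_assoc]
end

section
/- Suppose S is a semigroup such that every identity u ≈ v satisfied by S has property P_{(p ≤ c, q ≤ d)}. Then for each 0 ≤ u₀ ≤ p−1 and 0 ≤ v₀ ≤ c−p, every identity satisfied by S also has property P_{(p−u₀ ≤ c−u₀−v₀, q ≤ d)}. -/
/-- Product of the values of a word in a semigroup, as an `Option` (`none` for the
empty word). -/
def oprod {S : Type*} [Mul S] (f : ℕ → S) (u : List ℕ) : Option S :=
  u.foldl (fun o a => match o with
    | none => some (f a)
    | some s => some (s * f a)) none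

/-- A semigroup `S` satisfies the identity `u ≈ v` (both words nonempty) if every
substitution of elements of `S` for the variables gives equal values. -/
def SatS (S : Type*) [Semigroup S] (u v : List ℕ) : Prop :=
  ∀ f : ℕ → S, oprod f u = oprod f v

/-- The position (index) in `u` of the `i`-th (1-indexed) occurrence of the
variable `x`; equals `u.length` if there is no such occurrence. -/
def nthOccPos (u : List ℕ) (x i : ℕ) : ℕ :=
  ((List.range u.length).filter (fun k => u[k]? == some x)).getD (i - 1) u.length

/-- `(ᵢx) <_u (ⱼy)` : the `i`-th occurrence of `x` precedes the `j`-th occurrence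
of `y` in the word `u`. -/
def Precedes (u : List ℕ) (x i y j : ℕ) : Prop := nthOccPos u x i < nthOccPos u y j

/-- An identity `u ≈ v` satisfies property `P_{(p ≤ c, q ≤ d)}` if for all variables
`x`, `y` occurring `c` resp. `d` times in both sides, `(ₚx) <_u (_q y)` iff
`(ₚx) <_v (_q y)`. -/
def PropP (p c q d : ℕ) (u v : List ℕ) : Prop :=
  ∀ x y : ℕ, u.count x = c → v.count x = c → u.count y = d → v.count y = d →
    (Precedes u x p y q ↔ Precedes v x p y q)

def occList (u : List ℕ) (x : ℕ) : List ℕ :=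
  (List.range u.length).filter (fun k => u[k]? == some x)

lemma nthOccPos_eq (u : List ℕ) (x i : ℕ) :
    nthOccPos u x i = ((occList u x)[i-1]?).getD u.length := by
  rw [nthOccPos, List.getD_eq_getElem?_getD]; rfl

lemma occList_cons (a : ℕ) (u : List ℕ) (x : ℕ) :
    occList (a :: u) x = (if a = x then [0] else []) ++ (occList u x).map (· + 1) := by
  unfold occList
  rw [List.length_cons, List.range_succ_eq_map, List.filter_cons]
  have h1 : (List.map Nat.succ (List.range u.length)).filter
      (fun k => (a :: u)[k]? == some x)
      = ((List.range u.length).filter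
        ((fun k => (a :: u)[k]? == some x) ∘ Nat.succ)).map Nat.succ :=
    List.filter_map
  have h2 : ((fun k => (a :: u)[k]? == some x) ∘ Nat.succ)
      = (fun k => u[k]? == some x) := by
    funext k; simp [Function.comp]
  rw [h1, h2]
  by_cases h : a = x <;> simp [h, Nat.succ_eq_add_one]

lemma occList_append (u w : List ℕ) (x : ℕ) :
    occList (u ++ w) x = occList u x ++ (occList w x).map (· + u.length) := by
  induction u with
  | nil => simp [occList]
  | cons a u ih =>
    rw [List.cons_append, occList_cons, ih, occList_cons]
    simp [List.map_append, List.map_map, List.append_assoc, Function.comp, Nat.add_assoc]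

lemma occList_replicate_self (n x : ℕ) : occList (List.replicate n x) x = List.range n := by
  induction n with
  | zero => simp [occList]
  | succ n ih =>
    rw [List.replicate_succ, occList_cons, ih, List.range_succ_eq_map]
    simp [Nat.succ_eq_add_one]

lemma occList_replicate_ne (n x y : ℕ) (h : x ≠ y) : occList (List.replicate n x) y = [] := by
  induction n with
  | zero => simp [occList]
  | succ n ih => rw [List.replicate_succ, occList_cons, ih]; simp [h]

lemma occList_length (u : List ℕ) (x : ℕ) : (occList u x).length = u.count x := by
  induction u with
  | nil => simp [occList]
  | cons a u ih =>
    rw [occList_cons, List.count_cons]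
    by_cases h : a = x <;> simp [h, ih]

lemma occList_pairwise (u : List ℕ) (x : ℕ) : (occList u x).Pairwise (· < ·) :=
  (List.pairwise_lt_range).filter _

lemma mem_occList_lt {u : List ℕ} {x k : ℕ} (h : k ∈ occList u x) : k < u.length := by
  have := List.mem_filter.mp h
  exact List.mem_range.mp this.1

lemma nthOccPos_out {u : List ℕ} {x i : ℕ} (h : u.count x ≤ i - 1) :
    nthOccPos u x i = u.length := by
  rw [nthOccPos_eq, List.getElem?_eq_none (by rw [occList_length]; exact h)]
  rfl

lemma nthOccPos_in {u : List ℕ} {x i : ℕ} (h : i - 1 < u.count x) :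
    (occList u x)[i-1]? = some (nthOccPos u x i) ∧ nthOccPos u x i < u.length := by
  have hc : i - 1 < (occList u x).length := by rw [occList_length]; exact h
  have e : (occList u x)[i-1]? = some ((occList u x)[i-1]'hc) := List.getElem?_eq_getElem hc
  have e2 : nthOccPos u x i = (occList u x)[i-1]'hc := by
    rw [nthOccPos_eq, e]; rfl
  constructor
  · rw [e2]; exact e
  · rw [e2]; exact mem_occList_lt (List.getElem_mem hc)

lemma precedes_self (u : List ℕ) (x i j : ℕ) :
    Precedes u x i x j ↔ (i - 1 < u.count x ∧ (u.count x ≤ j - 1 ∨ i - 1 < j - 1)) := by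
  unfold Precedes
  have hpw := List.pairwise_iff_getElem.mp (occList_pairwise u x)
  by_cases hi : i - 1 < u.count x
  · obtain ⟨ei, hlt⟩ := nthOccPos_in hi
    by_cases hj : j - 1 < u.count x
    · obtain ⟨ej, hltj⟩ := nthOccPos_in hj
      have hci : i - 1 < (occList u x).length := by rwa [occList_length]
      have hcj : j - 1 < (occList u x).length := by rwa [occList_length]
      have vi : nthOccPos u x i = (occList u x)[i-1]'hci := by
        have := List.getElem?_eq_getElem hci; rw [this] at ei; exact (Option.some_inj.mp ei).symm
      have vj : nthOccPos u x j = (occList u x)[j-1]'hcj := by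
        have := List.getElem?_eq_getElem hcj; rw [this] at ej; exact (Option.some_inj.mp ej).symm
      rw [vi, vj]
      constructor
      · intro hlt2
        refine ⟨hi, Or.inr ?_⟩
        by_contra hc
        push_neg at hc
        rcases Nat.lt_or_ge (j-1) (i-1) with h' | h'
        · exact absurd (hpw _ _ hcj hci h') (by omega)
        · have hji : j - 1 = i - 1 := by omega
          have : (occList u x)[j-1]'hcj = (occList u x)[i-1]'hci := by
            congr 1
          rw [this] at hlt2
          exact lt_irrefl _ hlt2
      · rintro ⟨-, h'⟩
        rcases h' with h' | h'
        · omega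
        · exact hpw _ _ hci hcj h'
    · rw [nthOccPos_out (u := u) (x := x) (i := j) (by omega)]
      exact iff_of_true hlt ⟨hi, Or.inl (by omega)⟩
  · rw [nthOccPos_out (u := u) (x := x) (i := i) (by omega)]
    by_cases hj : j - 1 < u.count x
    · obtain ⟨-, hltj⟩ := nthOccPos_in hj
      exact iff_of_false (by omega) (fun h => hi h.1)
    · rw [nthOccPos_out (u := u) (x := x) (i := j) (by omega)]
      exact iff_of_false (lt_irrefl _) (fun h => hi h.1)

lemma occList_pad_self (u₀ v₀ x : ℕ) (u : List ℕ) :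
    occList (List.replicate u₀ x ++ u ++ List.replicate v₀ x) x
      = List.range u₀ ++ (occList u x).map (· + u₀)
          ++ (List.range v₀).map (· + (u₀ + u.length)) := by
  rw [occList_append, occList_append, occList_replicate_self, occList_replicate_self]
  simp [List.map_map, Function.comp, Nat.add_comm]

lemma occList_pad_ne (u₀ v₀ x y : ℕ) (u : List ℕ) (h : y ≠ x) :
    occList (List.replicate u₀ x ++ u ++ List.replicate v₀ x) y
      = (occList u y).map (· + u₀) := by
  rw [occList_append, occList_append, occList_replicate_ne _ _ _ (Ne.symm h),
    occList_replicate_ne _ _ _ (Ne.symm h)]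
  simp

lemma nthOccPos_pad_x {u₀ v₀ x p : ℕ} (u : List ℕ) (h1 : u₀ < p) (h2 : p - u₀ ≤ u.count x) :
    nthOccPos (List.replicate u₀ x ++ u ++ List.replicate v₀ x) x p
      = u₀ + nthOccPos u x (p - u₀) := by
  have hin : p - u₀ - 1 < u.count x := by omega
  obtain ⟨e, hlt⟩ := nthOccPos_in hin
  rw [nthOccPos_eq, occList_pad_self]
  have hlen : (List.range u₀ ++ (occList u x).map (· + u₀)).length = u₀ + u.count x := by
    simp [occList_length]
  rw [List.getElem?_append_left (by simp [occList_length]; omega),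
    List.getElem?_append_right (by simp; omega)]
  simp only [List.length_range]
  have hidx : p - 1 - u₀ = p - u₀ - 1 := by omega
  rw [hidx, List.getElem?_map, e]
  simp [Nat.add_comm]

lemma nthOccPos_pad_y {u₀ v₀ x y q : ℕ} (u : List ℕ) (h : y ≠ x) :
    nthOccPos (List.replicate u₀ x ++ u ++ List.replicate v₀ x) y q
      = if q - 1 < u.count y then u₀ + nthOccPos u y q else u₀ + u.length + v₀ := by
  rw [nthOccPos_eq, occList_pad_ne _ _ _ _ _ h, List.getElem?_map]
  by_cases hq : q - 1 < u.count y
  · obtain ⟨e, hlt⟩ := nthOccPos_in hq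
    rw [e]
    simp [hq, Nat.add_comm]
  · rw [List.getElem?_eq_none (by rw [occList_length]; omega)]
    simp [hq]
    omega

lemma precedes_pad {u₀ v₀ x y p q : ℕ} (u : List ℕ) (hxy : x ≠ y)
    (h1 : u₀ < p) (h2 : p - u₀ ≤ u.count x) :
    Precedes (List.replicate u₀ x ++ u ++ List.replicate v₀ x) x p y q
      ↔ Precedes u x (p - u₀) y q := by
  unfold Precedes
  have hin : p - u₀ - 1 < u.count x := by omega
  obtain ⟨-, hlt⟩ := nthOccPos_in hin
  rw [nthOccPos_pad_x u h1 h2, nthOccPos_pad_y u (Ne.symm hxy)]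
  by_cases hq : q - 1 < u.count y
  · simp [hq, Nat.add_lt_add_iff_left]
  · rw [nthOccPos_out (u := u) (x := y) (i := q) (by omega)]
    simp [hq]
    omega

section Alg
variable {S : Type*} [Semigroup S]

def stp (f : ℕ → S) : Option S → ℕ → Option S := fun o a => match o with
  | none => some (f a)
  | some s => some (s * f a)

lemma oprod_eq (f : ℕ → S) (u : List ℕ) : oprod f u = u.foldl (stp f) none := rfl

lemma foldl_stp_some (f : ℕ → S) (w : List ℕ) : ∀ s : S,
    w.foldl (stp f) (some s)
      = (w.foldl (stp f) none).elim (some s) (fun t => some (s * t)) := by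
  induction w with
  | nil => intro s; rfl
  | cons a w ih =>
    intro s
    show w.foldl (stp f) (some (s * f a)) = (w.foldl (stp f) (some (f a))).elim _ _
    rw [ih, ih]
    cases h : w.foldl (stp f) none <;> simp [mul_assoc]

lemma foldl_stp_congr (f : ℕ → S) {u v : List ℕ}
    (h : u.foldl (stp f) none = v.foldl (stp f) none) (o : Option S) :
    u.foldl (stp f) o = v.foldl (stp f) o := by
  cases o with
  | none => exact h
  | some s => rw [foldl_stp_some, foldl_stp_some, h]

lemma sat_pad {u v : List ℕ} (a b : List ℕ) (h : SatS S u v) :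
    SatS S (a ++ u ++ b) (a ++ v ++ b) := by
  intro f
  have h' := h f
  rw [oprod_eq, oprod_eq] at h' ⊢
  rw [List.foldl_append, List.foldl_append, List.foldl_append, List.foldl_append]
  rw [foldl_stp_congr f h' _]

end Alg

/-- Observation 6.3: if every identity (of nonempty words) satisfied by a semigroup
`S` has property `P_{(p ≤ c, q ≤ d)}`, then for all `0 ≤ u₀ ≤ p-1` and
`0 ≤ v₀ ≤ c-p`, every identity of `S` has property `P_{(p-u₀ ≤ c-u₀-v₀, q ≤ d)}`. -/
theorem propP_shift {S : Type*} [Semigroup S] (p c q d : ℕ)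
    (hp : 1 ≤ p) (hpc : p ≤ c) (hq : 1 ≤ q) (hqd : q ≤ d)
    (H : ∀ u v : List ℕ, u ≠ [] → v ≠ [] → SatS S u v → PropP p c q d u v) :
    ∀ u₀ v₀ : ℕ, u₀ ≤ p - 1 → v₀ ≤ c - p →
      ∀ u v : List ℕ, u ≠ [] → v ≠ [] → SatS S u v →
        PropP (p - u₀) (c - u₀ - v₀) q d u v := by
  intro u₀ v₀ hu₀ hv₀ u v hu hv hsat x y hxu hxv hyu hyv
  by_cases hxy : x = y
  · subst hxy
    rw [precedes_self, precedes_self, hxu, hxv]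
  · have h1 : u₀ < p := by omega
    have h2u : p - u₀ ≤ u.count x := by rw [hxu]; omega
    have h2v : p - u₀ ≤ v.count x := by rw [hxv]; omega
    have hsat' := sat_pad (List.replicate u₀ x) (List.replicate v₀ x) hsat
    have hne : ∀ w : List ℕ, w ≠ [] →
        List.replicate u₀ x ++ w ++ List.replicate v₀ x ≠ [] := by
      intro w hw hcon
      rcases List.append_eq_nil_iff.mp hcon with ⟨h3, -⟩
      exact hw (List.append_eq_nil_iff.mp h3).2
    have hcx : ∀ w : List ℕ, w.count x = c - u₀ - v₀ →
        (List.replicate u₀ x ++ w ++ List.replicate v₀ x).count x = c := by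
      intro w hw
      simp [List.count_append, List.count_replicate, hw]
      omega
    have hcy : ∀ w : List ℕ, w.count y = d →
        (List.replicate u₀ x ++ w ++ List.replicate v₀ x).count y = d := by
      intro w hw
      simp [List.count_append, List.count_replicate, hw, hxy]
    have hP := H _ _ (hne u hu) (hne v hv) hsat' x y
      (hcx u hxu) (hcx v hxv) (hcy u hyu) (hcy v hyv)
    rw [← precedes_pad u hxy h1 h2u, ← precedes_pad v hxy h1 h2v]
    exact hP
end

section
/- A monoid M satisfies only m-balanced identities if and only if x^m is an isoterm for M, where an identity u ≈ v is m-balanced if con(u) = con(v) and for each variable x, occ(x,u) = occ(x,v) whenever occ(x,u) ≤ m or occ(x,v) ≤ m. -/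
/-- A monoid `M` satisfies the identity `u ≈ v` if every substitution of elements of
`M` for the variables (letters, which are naturals) makes the two sides equal. -/
def SatM (M : Type*) [Monoid M] (u v : List ℕ) : Prop :=
  ∀ f : ℕ → M, (u.map f).prod = (v.map f).prod

/-- A word `w` is an isoterm for the monoid `M` if the only word `v` with
`M ⊨ w ≈ v` is `w` itself. -/
def Isoterm (M : Type*) [Monoid M] (w : List ℕ) : Prop :=
  ∀ v : List ℕ, SatM M w v → v = w

/-- An identity `u ≈ v` is `m`-balanced if `u` and `v` have the same content and
every variable occurring at most `m` times in one of the sides occurs the same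
number of times in both. -/
def IdBalanced (m : ℕ) (u v : List ℕ) : Prop :=
  (∀ x : ℕ, x ∈ u ↔ x ∈ v) ∧
  ∀ x : ℕ, (u.count x ≤ m ∨ v.count x ≤ m) → u.count x = v.count x

private lemma prod_map_indicator {M : Type*} [Monoid M] (a : M) (x : ℕ) :
    ∀ u : List ℕ, (u.map fun y => if y = x then a else 1).prod = a ^ u.count x := by
  intro u
  induction u with
  | nil => simp
  | cons h t ih =>
    by_cases hx : h = x <;>
      simp [hx, List.count_cons, ih, pow_succ']

private lemma helper {M : Type*} [Monoid M] {m : ℕ}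
    (iso : Isoterm M (List.replicate m 0)) {p q : ℕ}
    (hpq : ∀ a : M, a ^ p = a ^ q) (hq : q ≤ m) : p = q := by
  have hsat : SatM M (List.replicate m 0) (List.replicate (m - q + p) 0) := by
    intro f
    simp only [List.map_replicate, List.prod_replicate]
    calc f 0 ^ m = f 0 ^ (m - q) * f 0 ^ q := by rw [← pow_add]; congr 1; omega
    _ = f 0 ^ (m - q) * f 0 ^ p := by rw [hpq]
    _ = f 0 ^ (m - q + p) := by rw [← pow_add]
  have := iso _ hsat
  have hl := congrArg List.length this
  simp only [List.length_replicate] at hl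
  omega

/-- A monoid satisfies only `m`-balanced identities iff `x^m` is an isoterm for it. -/
theorem balanced_iff_isoterm_pow (M : Type*) [Monoid M] (m : ℕ) :
    (∀ u v : List ℕ, SatM M u v → IdBalanced m u v) ↔
      Isoterm M (List.replicate m 0) := by
  constructor
  · intro h v hv
    obtain ⟨hcon, hcnt⟩ := h _ _ hv
    have hc0 : v.count 0 = m := by
      have := hcnt 0 (Or.inl (by simp))
      simpa using this.symm
    have hall : ∀ b ∈ v, b = 0 := by
      intro b hb
      by_contra hb0
      have := (hcon b).2 hb
      simp only [List.mem_replicate] at this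
      exact hb0 this.2
    rw [List.eq_replicate_iff]
    refine ⟨?_, hall⟩
    rw [← hc0]
    exact (List.count_eq_length.2 fun b hb => (hall b hb).symm).symm
  · intro iso u v huv
    have key : ∀ x : ℕ, ∀ a : M, a ^ u.count x = a ^ v.count x := by
      intro x a
      have := huv (fun y => if y = x then a else 1)
      rwa [prod_map_indicator, prod_map_indicator] at this
    have hcnt : ∀ x : ℕ, (u.count x ≤ m ∨ v.count x ≤ m) → u.count x = v.count x := by
      intro x hx
      rcases hx with hx | hx
      · exact (helper iso (fun a => (key x a).symm) hx).symm
      · exact helper iso (key x) hx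
    refine ⟨fun x => ?_, hcnt⟩
    constructor
    · intro hxu
      by_contra hxv
      have h0 : v.count x = 0 := List.count_eq_zero.2 hxv
      have := hcnt x (Or.inr (by omega))
      have hp : 0 < u.count x := List.count_pos_iff.2 hxu
      omega
    · intro hxv
      by_contra hxu
      have h0 : u.count x = 0 := List.count_eq_zero.2 hxu
      have := hcnt x (Or.inl (by omega))
      have hp : 0 < v.count x := List.count_pos_iff.2 hxv
      omega
end

section
/- If every variable occurs fewer than α times in every word of the set W, then the monoid M(W) satisfies the identities x^α ≈ x^{α+1} and t_1 x t_2 x ⋯ t_α x ≈ x^α t_1 t_2 ⋯ t_α. -/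
open scoped Classical

def Fac (W : Set (List ℕ)) (u : List ℕ) : Prop := u = [] ∨ ∃ w ∈ W, u <:+: w

lemma Fac.of_infix {W : Set (List ℕ)} {u v : List ℕ} (h : Fac W u) (hv : v <:+: u) :
    Fac W v := by
  rcases h with rfl | ⟨w, hw, hu⟩
  · left; simpa using hv
  · exact Or.inr ⟨w, hw, hv.trans hu⟩

def MWord (W : Set (List ℕ)) : Type := Option {u : List ℕ // Fac W u}

noncomputable def mwMul {W : Set (List ℕ)} : MWord W → MWord W → MWord W
  | some a, some b =>
      if h : Fac W (a.1 ++ b.1) then some ⟨a.1 ++ b.1, h⟩ else none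
  | _, _ => none

lemma mwMul_none_left {W : Set (List ℕ)} (b : MWord W) : mwMul none b = none := by
  cases b <;> rfl

lemma mwMul_none_right {W : Set (List ℕ)} (a : MWord W) : mwMul a none = none := by
  cases a <;> rfl

lemma mwMul_some_some {W : Set (List ℕ)} (a b : {u : List ℕ // Fac W u}) :
    mwMul (some a) (some b) =
      if h : Fac W (a.1 ++ b.1) then some ⟨a.1 ++ b.1, h⟩ else none := rfl

noncomputable instance MWord.monoid (W : Set (List ℕ)) : Monoid (MWord W) where
  mul := mwMul
  one := some ⟨[], Or.inl rfl⟩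
  one_mul a := by
    show mwMul (some ⟨[], Or.inl rfl⟩) a = a
    cases a with
    | none => rfl
    | some a => exact dif_pos a.2
  mul_one a := by
    show mwMul a (some ⟨[], Or.inl rfl⟩) = a
    cases a with
    | none => rfl
    | some a =>
      have h : Fac W (a.1 ++ []) := by simpa using a.2
      rw [mwMul_some_some, dif_pos h]
      exact congrArg some (Subtype.ext (List.append_nil _))
  mul_assoc a b c := by
    show mwMul (mwMul a b) c = mwMul a (mwMul b c)
    cases a with
    | none => exact mwMul_none_left _
    | some a =>
      cases b with
      | none => erw [mwMul_none_right, mwMul_none_left]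
      | some b =>
        cases c with
        | none => erw [mwMul_none_right, mwMul_none_right]
        | some c =>
          by_cases hab : Fac W (a.1 ++ b.1)
          · by_cases hbc : Fac W (b.1 ++ c.1)
            · rw [mwMul_some_some b c, dif_pos hbc, mwMul_some_some a b, dif_pos hab,
                mwMul_some_some, mwMul_some_some]
              by_cases habc : Fac W (a.1 ++ b.1 ++ c.1)
              · have habc' : Fac W (a.1 ++ (b.1 ++ c.1)) := by
                  rwa [← List.append_assoc]
                rw [dif_pos habc, dif_pos habc']
                exact congrArg some (Subtype.ext (List.append_assoc _ _ _))
              · have habc' : ¬ Fac W (a.1 ++ (b.1 ++ c.1)) := by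
                  rwa [← List.append_assoc]
                rw [dif_neg habc, dif_neg habc']
            · rw [mwMul_some_some b c, dif_neg hbc]; erw [mwMul_none_right]; rw [
                mwMul_some_some a b, dif_pos hab, mwMul_some_some]
              have : ¬ Fac W (a.1 ++ b.1 ++ c.1) := fun h =>
                hbc (h.of_infix (by rw [List.append_assoc]; exact
                  (List.suffix_append a.1 (b.1 ++ c.1)).isInfix))
              rw [dif_neg this]
          · rw [mwMul_some_some a b, dif_neg hab]; erw [mwMul_none_left]
            cases hc : mwMul (some b) (some c) with
            | none => erw [mwMul_none_right]
            | some bc =>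
              rw [mwMul_some_some]
              have hbc : bc.1 = b.1 ++ c.1 := by
                rw [mwMul_some_some] at hc
                by_cases h : Fac W (b.1 ++ c.1)
                · rw [dif_pos h] at hc; cases hc; rfl
                · rw [dif_neg h] at hc; cases hc
              have : ¬ Fac W (a.1 ++ bc.1) := by
                rw [hbc]
                exact fun h => hab (h.of_infix (by
                  rw [← List.append_assoc]
                  exact (List.prefix_append (a.1 ++ b.1) c.1).isInfix))
              rw [dif_neg this]

section Aux

variable {W : Set (List ℕ)}

def wordOf : MWord W → List ℕ
  | some u => u.1
  | none => []

lemma MWord.mul_def (a b : MWord W) : a * b = mwMul a b := rfl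

lemma MWord.one_def : (1 : MWord W) = some ⟨[], Or.inl rfl⟩ := rfl

lemma mul_eq_some {a b : MWord W} {c : {u : List ℕ // Fac W u}} (h : a * b = some c) :
    ∃ a' b', a = some a' ∧ b = some b' ∧ c.1 = a'.1 ++ b'.1 := by
  rw [MWord.mul_def] at h
  cases a with
  | none => rw [mwMul_none_left] at h; exact absurd h (by simp)
  | some a' =>
    cases b with
    | none => erw [mwMul_none_right] at h; exact absurd h (by simp)
    | some b' =>
      rw [mwMul_some_some] at h
      by_cases hf : Fac W (a'.1 ++ b'.1)
      · rw [dif_pos hf] at h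
        refine ⟨a', b', rfl, rfl, ?_⟩
        cases h; rfl
      · rw [dif_neg hf] at h; exact absurd h (by simp)

lemma prod_eq_some : ∀ (L : List (MWord W)) (c : {u : List ℕ // Fac W u}),
    L.prod = some c → c.1 = (L.map wordOf).flatten
  | [], c, h => by
      have h' : (some ⟨[], Or.inl rfl⟩ : MWord W) = some c := h
      cases h'
      simp
  | a :: L, c, h => by
      rw [List.prod_cons] at h
      obtain ⟨a', d, ha, hd, hc⟩ := mul_eq_some h
      have := prod_eq_some L d hd
      subst ha
      simp [wordOf, hc, this]; rfl

lemma none_mem_prod : ∀ L : List (MWord W), none ∈ L → L.prod = none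
  | a :: L, hm => by
      rw [List.prod_cons]
      rcases List.mem_cons.1 hm with rfl | hm
      · exact mwMul_none_left _
      · rw [none_mem_prod L hm]; exact mwMul_none_right _

lemma count_mul_le_sum (g : ℕ → ℕ) : ∀ s : List ℕ, s.count 0 * g 0 ≤ (s.map g).sum
  | [] => by simp
  | a :: s => by
      have := count_mul_le_sum g s
      simp only [List.map_cons, List.sum_cons]
      rcases eq_or_ne a 0 with rfl | ha
      · rw [List.count_cons_self]
        nlinarith
      · rw [List.count_cons_of_ne ha]
        omega

lemma count_flatten_eq (x : ℕ) : ∀ l : List (List ℕ),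
    l.flatten.count x = (l.map (fun s => s.count x)).sum
  | [] => by simp
  | a :: l => by simp [List.count_append, count_flatten_eq x l]

lemma key_s13 {α : ℕ} (hα : 1 ≤ α) (h : ∀ w ∈ W, ∀ x : ℕ, w.count x < α)
    {s : List ℕ} (hs : α ≤ s.count 0) {f : ℕ → MWord W} {u : {u : List ℕ // Fac W u}}
    (hfu : f 0 = some u) (hne : u.1 ≠ []) : (s.map f).prod = none := by
  cases hp : (s.map f).prod with
  | none => rfl
  | some c =>
    exfalso
    have hc := prod_eq_some _ _ hp
    obtain ⟨x₀, hx₀⟩ := List.exists_mem_of_ne_nil u.1 hne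
    have h1 : 1 ≤ u.1.count x₀ := List.count_pos_iff.2 hx₀
    have hsum : α ≤ c.1.count x₀ := by
      rw [hc, count_flatten_eq, List.map_map, List.map_map]
      calc α ≤ s.count 0 * u.1.count x₀ := by nlinarith
        _ ≤ (s.map fun y => ((wordOf ∘ f) y).count x₀).sum := by
            have := count_mul_le_sum (fun y => ((wordOf ∘ f) y).count x₀) s
            simpa [Function.comp, hfu, wordOf] using this
        _ = _ := by rfl
    rcases c.2 with hcnil | ⟨w, hw, hinf⟩
    · rw [hcnil] at hsum; simp at hsum; omega
    · have hle := hinf.sublist.count_le x₀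
      have := h w hw x₀
      omega

lemma count0_flat : ∀ n : ℕ, ((List.range n).flatMap (fun i => [i + 1, 0])).count 0 = n
  | 0 => by simp
  | n + 1 => by
      rw [List.range_succ, List.flatMap_append, List.count_append, count0_flat n]
      simp

end Aux

/-- If every variable occurs fewer than `α` times in every word of `W`, then `M(W)`
satisfies `x^α ≈ x^{α+1}` and `t₁ x t₂ x ⋯ t_α x ≈ x^α t₁ t₂ ⋯ t_α`
(with `x` the variable `0` and `tᵢ` the variable `i`). -/
theorem MWord_satisfies_A (W : Set (List ℕ)) (α : ℕ) (hα : 1 ≤ α)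
    (h : ∀ w ∈ W, ∀ x : ℕ, w.count x < α) :
    SatM (MWord W) (List.replicate α 0) (List.replicate (α + 1) 0) ∧
    SatM (MWord W) ((List.range α).flatMap (fun i => [i + 1, 0]))
      (List.replicate α 0 ++ (List.range α).map (fun i => i + 1)) := by
  have hα0 : α ≠ 0 := by omega
  constructor
  · intro f
    cases hf : f 0 with
    | none =>
      rw [none_mem_prod, none_mem_prod]
      · rw [List.map_replicate]
        exact hf ▸ List.mem_replicate.2 ⟨by omega, rfl⟩
      · rw [List.map_replicate]
        exact hf ▸ List.mem_replicate.2 ⟨hα0, rfl⟩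
    | some u =>
      by_cases hu : u.1 = []
      · have hu1 : f 0 = 1 := by
          rw [hf, MWord.one_def]
          exact congrArg some (Subtype.ext hu)
        simp [hu1]
      · rw [key_s13 hα h (s := List.replicate α 0) (by simp) hf hu,
          key_s13 hα h (s := List.replicate (α + 1) 0) (by simp) hf hu]
  · intro f
    cases hf : f 0 with
    | none =>
      rw [none_mem_prod, none_mem_prod]
      · refine List.mem_map.2 ⟨0, ?_, hf⟩
        exact List.mem_append_left _ (List.mem_replicate.2 ⟨hα0, rfl⟩)
      · refine List.mem_map.2 ⟨0, ?_, hf⟩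
        exact List.mem_flatMap.2 ⟨0, List.mem_range.2 (by omega), by simp⟩
    | some u =>
      by_cases hu : u.1 = []
      · have hu1 : f 0 = 1 := by
          rw [hf, MWord.one_def]
          exact congrArg some (Subtype.ext hu)
        rw [List.map_flatMap, List.map_append, List.prod_append, List.map_replicate,
          List.prod_replicate, hu1, one_pow, one_mul, List.map_map]
        have : ∀ n : ℕ, ((List.range n).flatMap fun i => [i + 1, 0].map f).prod
            = ((List.range n).map (f ∘ fun i => i + 1)).prod := by
          intro n
          induction n with
          | zero => simp
          | succ n ih =>
            rw [List.range_succ, List.flatMap_append, List.prod_append, ih,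
              List.map_append, List.prod_append]
            simp [hu1]
        exact this α
      · rw [key_s13 hα h (s := (List.range α).flatMap fun i => [i + 1, 0])
            (by rw [count0_flat]) hf hu,
          key_s13 hα h (s := List.replicate α 0 ++ (List.range α).map fun i => i + 1)
            (by simp [List.count_append, List.count_eq_zero]) hf hu]
end
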